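/- arXiv:1907.12884 — 10 statements merged into one kernel-verified Lean document; each statement's English description precedes it below -/
import Mathlib

section
/- For natural numbers k, the sum ∑_{j=0}^{k} (1/(j+1))·C(k,j)² equals (1/(k+1))·C(2k+1,k), where C(n,m) denotes the binomial coefficient. -/
open Finset

lemma key_vdm (k : ℕ) : ∑ j ∈ Finset.range (k + 1), (k+1).choose (j+1) * k.choose j
    = (2 * k + 1).choose k := by
  symm
  calc (2*k+1).choose k = ((k+1)+k).choose (k+1) := by
        rw [show (k+1)+k = 2*k+1 by ring, ← Nat.choose_symm (show k ≤ 2*k+1 by omega)]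
        congr 1; omega
    _ = ∑ i ∈ Finset.range (k+2), (k+1).choose i * k.choose (k+1-i) := by
        rw [Nat.add_choose_eq, Finset.Nat.sum_antidiagonal_eq_sum_range_succ_mk]
    _ = ∑ j ∈ Finset.range (k+1), (k+1).choose (j+1) * k.choose (k-j) := by
        rw [Finset.sum_range_succ']
        simp [Nat.succ_sub_succ, Nat.choose_succ_self]
    _ = ∑ j ∈ Finset.range (k+1), (k+1).choose (j+1) * k.choose j := by
        refine Finset.sum_congr rfl fun j hj => ?_
        rw [Nat.choose_symm (by simpa using Nat.lt_succ_iff.mp (Finset.mem_range.mp hj))]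

theorem stmt_1 (k : ℕ) :
    ∑ j ∈ Finset.range (k + 1), (1 / (j + 1) : ℚ) * (k.choose j) ^ 2
      = (1 / (k + 1) : ℚ) * ((2 * k + 1).choose k) := by
  rw [← key_vdm k]
  push_cast
  rw [Finset.mul_sum]
  refine Finset.sum_congr rfl fun j hj => ?_
  have h : ((k+1 : ℕ) : ℚ) * k.choose j = (k+1).choose (j+1) * ((j+1 : ℕ) : ℚ) := by
    exact_mod_cast congrArg (Nat.cast : ℕ → ℚ) (Nat.add_one_mul_choose_eq k j)
  push_cast at h
  have hj1 : ((j : ℚ) + 1) ≠ 0 := by positivity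
  have hk1 : ((k : ℚ) + 1) ≠ 0 := by positivity
  field_simp
  ring_nf
  ring_nf at h
  nlinarith [h, sq_nonneg ((k.choose j : ℚ))]
end

section
/- For complex numbers a, b, c (with c not a nonpositive integer) and parameters t, θ such that all series converge absolutely: e^{tθ}·₂F₁(a,b;c;t) = ∑_{m=0}^{∞} ((tθ)^m/m!)·₃F₁(a,b,-m;c;-1/θ). In particular, for a = b = -k with k a natural number (so all inner series are finite sums), e^{tθ}·∑_{i=0}^{k} ((-k)_i)²/((c)_i·i!)·t^i = ∑_{m=0}^{∞} ((tθ)^m/m!)·∑_{i=0}^{m∧k} ((-k)_i)²·(-m)_i/((c)_i·i!)·(-1/θ)^i. -/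
open Finset

/-- The rising factorial (Pochhammer symbol) `(a)_n = a (a+1) ⋯ (a+n-1)` for a real `a`. -/
noncomputable def rf (a : ℝ) (n : ℕ) : ℝ := ∏ j ∈ Finset.range n, (a + j)

lemma rf_succ (a : ℝ) (n : ℕ) : rf a (n + 1) = rf a n * (a + n) := by
  simp [rf, Finset.prod_range_succ]

lemma rf_neg_nat_of_gt {m i : ℕ} (h : m < i) : rf (-(m : ℝ)) i = 0 := by
  apply Finset.prod_eq_zero (Finset.mem_range.mpr h)
  simp

lemma rf_neg_nat {m : ℕ} : ∀ i ≤ m, rf (-(m : ℝ)) i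
    = (-1) ^ i * (m.factorial : ℝ) / (m - i).factorial := by
  intro i hi
  induction i with
  | zero =>
      have hmf : (m.factorial : ℝ) ≠ 0 := by positivity
      simp [rf, div_self hmf]
  | succ n ih =>
      have hlt : n < m := lt_of_lt_of_le (Nat.lt_succ_self n) hi
      rw [rf_succ, ih (le_of_lt hlt)]
      have h2n : (m - n).factorial = (m - n) * (m - (n + 1)).factorial := by
        have h1 : m - n = (m - (n + 1)) + 1 := by omega
        rw [h1, Nat.factorial_succ, ← h1]
      have h2 : ((m - n).factorial : ℝ)
          = ((m - n : ℕ) : ℝ) * (m - (n + 1)).factorial := by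
        exact_mod_cast h2n
      have h3 : (-(m : ℝ) + n) = -((m - n : ℕ) : ℝ) := by
        rw [Nat.cast_sub (le_of_lt hlt)]; ring
      have hne : ((m - n : ℕ) : ℝ) ≠ 0 := by
        have : 0 < m - n := by omega
        positivity
      have hfac : ((m - (n + 1)).factorial : ℝ) ≠ 0 := by positivity
      rw [h3, h2]
      field_simp
      ring

/-- Exton's lemma in the terminating case `a = b = -k`:
`e^{tθ} ₂F₁(-k,-k;c;t) = ∑_m (tθ)^m/m! ₃F₁(-k,-k,-m;c;-1/θ)`. -/
theorem stmt_5 (k : ℕ) (c t θ : ℝ) (hθ : θ ≠ 0) (hc : ∀ i : ℕ, rf c i ≠ 0) :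
    Real.exp (t * θ) *
        ∑ i ∈ Finset.range (k + 1),
          (rf (-(k : ℝ)) i) ^ 2 / (rf c i * i.factorial) * t ^ i
      = ∑' m : ℕ, (t * θ) ^ m / m.factorial *
          ∑ i ∈ Finset.range (min m k + 1),
            (rf (-(k : ℝ)) i) ^ 2 * rf (-(m : ℝ)) i / (rf c i * i.factorial)
              * (-1 / θ) ^ i := by
  set A : ℕ → ℝ := fun i => (rf (-(k : ℝ)) i) ^ 2 / (rf c i * i.factorial) with hA
  set g : ℕ → ℕ → ℝ := fun i m =>
    if i ≤ m then A i * t ^ i * ((t * θ) ^ (m - i) / (m - i).factorial) else 0 with hg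
  -- Step 1: rewrite each term of the RHS as a finite sum of g's
  have hterm : ∀ m : ℕ,
      (t * θ) ^ m / m.factorial *
          ∑ i ∈ Finset.range (min m k + 1),
            (rf (-(k : ℝ)) i) ^ 2 * rf (-(m : ℝ)) i / (rf c i * i.factorial)
              * (-1 / θ) ^ i
        = ∑ i ∈ Finset.range (k + 1), g i m := by
    intro m
    have hext : ∑ i ∈ Finset.range (min m k + 1),
          (rf (-(k : ℝ)) i) ^ 2 * rf (-(m : ℝ)) i / (rf c i * i.factorial)
            * (-1 / θ) ^ i
        = ∑ i ∈ Finset.range (k + 1),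
          (rf (-(k : ℝ)) i) ^ 2 * rf (-(m : ℝ)) i / (rf c i * i.factorial)
            * (-1 / θ) ^ i := by
      rcases le_or_gt k m with h | h
      · rw [min_eq_right h]
      · rw [min_eq_left (le_of_lt h)]
        refine Finset.sum_subset ?_ ?_
        · intro x hx
          simp only [Finset.mem_range] at *
          omega
        · intro x hx hnx
          simp only [Finset.mem_range] at hx hnx
          have : m < x := by omega
          rw [rf_neg_nat_of_gt this]
          ring
    rw [hext, Finset.mul_sum]
    refine Finset.sum_congr rfl fun i _ => ?_
    simp only [hg]
    rcases le_or_gt i m with h | h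
    · rw [if_pos h, rf_neg_nat i h, hA]
      have hm : (m.factorial : ℝ) ≠ 0 := by positivity
      have hmi : ((m - i).factorial : ℝ) ≠ 0 := by positivity
      have hpow : (t * θ) ^ m = t ^ i * (t * θ) ^ (m - i) * θ ^ i := by
        rw [mul_pow, mul_pow,
          show t ^ i * (t ^ (m - i) * θ ^ (m - i)) * θ ^ i
            = (t ^ i * t ^ (m - i)) * (θ ^ (m - i) * θ ^ i) from by ring,
          ← pow_add, ← pow_add, Nat.add_sub_cancel' h, Nat.sub_add_cancel h]
      have key : (t * θ) ^ m / m.factorial *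
            ((-1 : ℝ) ^ i * m.factorial / (m - i).factorial * (-1 / θ) ^ i)
          = t ^ i * ((t * θ) ^ (m - i) / (m - i).factorial) := by
        rw [div_pow, hpow]
        field_simp
        ring_nf
        have hsq : ((-1 : ℝ) ^ i) ^ 2 = 1 := by
          rw [← pow_mul, mul_comm, pow_mul]; norm_num
        simp [pow_mul, hsq]
      calc (t * θ) ^ m / m.factorial *
            ((rf (-(k : ℝ)) i) ^ 2 * ((-1) ^ i * (m.factorial : ℝ) / (m - i).factorial)
              / (rf c i * i.factorial) * (-1 / θ) ^ i)
          = (rf (-(k : ℝ)) i) ^ 2 / (rf c i * i.factorial) *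
              ((t * θ) ^ m / m.factorial *
                ((-1 : ℝ) ^ i * m.factorial / (m - i).factorial * (-1 / θ) ^ i)) := by
            ring
        _ = (rf (-(k : ℝ)) i) ^ 2 / (rf c i * i.factorial) *
              (t ^ i * ((t * θ) ^ (m - i) / (m - i).factorial)) := by rw [key]
        _ = _ := by ring
    · rw [if_neg (not_le.mpr h), rf_neg_nat_of_gt h]
      ring
  -- Step 2: summability and evaluation of each column
  have hshift : ∀ i : ℕ, (fun n => g i (n + i))
      = fun n => A i * t ^ i * ((t * θ) ^ n / n.factorial) := by
    intro i
    funext n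
    simp [hg, Nat.le_add_left, Nat.add_sub_cancel]
  have hsum : ∀ i : ℕ, Summable (fun m => g i m) := by
    intro i
    rw [← summable_nat_add_iff i, hshift i]
    exact (Real.summable_pow_div_factorial (t * θ)).mul_left _
  have hexp : Real.exp (t * θ) = ∑' n : ℕ, (t * θ) ^ n / n.factorial := by
    rw [Real.exp_eq_exp_ℝ, NormedSpace.exp_eq_tsum_div]
  have hcol : ∀ i : ℕ, ∑' m, g i m = A i * t ^ i * Real.exp (t * θ) := by
    intro i
    rw [← Summable.sum_add_tsum_nat_add i (hsum i)]
    have h0 : ∑ m ∈ Finset.range i, g i m = 0 := by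
      apply Finset.sum_eq_zero
      intro m hm
      simp only [Finset.mem_range] at hm
      simp [hg, Nat.not_le.mpr hm]
    rw [h0, zero_add]
    have := hshift i
    simp only [this]
    rw [tsum_mul_left, hexp]
  rw [tsum_congr hterm, Summable.tsum_finsetSum fun i _ => hsum i]
  simp only [hcol]
  rw [Finset.mul_sum]
  refine Finset.sum_congr rfl fun i _ => ?_
  ring
end

section
/- For real θ > 0, t > 0, and natural number k, the Poissonised Charlier factorial moment M^θ(k;t) := ∑_{m=0}^{∞} e^{-tθ}·(tθ)^m/m! · M^θ(k,m+1) equals θ^k·∑_{i=0}^{k} C(k,i)²·t^i/(i+1), i.e. θ^k·₂F₁(-k,-k;2;t). -/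
open Finset

/-- The `k`th factorial moment of the Charlier ensemble with `N` particles and parameter `θ`. -/
noncomputable def charlierMoment (θ : ℝ) (k N : ℕ) : ℝ :=
  ∑ i ∈ Finset.range (k + 1),
    θ ^ (k - i) * (k.choose i : ℝ) ^ 2 * ((N - i).ascFactorial i : ℝ) / (i + 1)

lemma asc_eq_desc (m i : ℕ) : (m + 1 - i).ascFactorial i = m.descFactorial i := by
  rcases le_or_gt i (m + 1) with h | h
  · rw [← Nat.add_descFactorial_eq_ascFactorial' (m + 1 - i) i]
    congr 1
    omega
  · have h1 : m + 1 - i = 0 := by omega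
    rw [h1]
    cases i with
    | zero => omega
    | succ j =>
      rw [Nat.zero_ascFactorial, Nat.descFactorial_eq_zero_iff_lt.2 (by omega)]

lemma poisson_hasSum (l : ℝ) (i : ℕ) :
    HasSum (fun m : ℕ => Real.exp (-l) * l ^ m / m.factorial * (m.descFactorial i : ℝ))
      (l ^ i) := by
  have hinj : Function.Injective (fun n : ℕ => n + i) := fun a b h => by
    simpa using h
  rw [← hinj.hasSum_iff]
  · have hexp : HasSum (fun n : ℕ => l ^ n / n.factorial) (Real.exp l) := by
      rw [Real.exp_eq_exp_ℝ]
      exact NormedSpace.expSeries_div_hasSum_exp l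
    have h := (hexp.mul_left (Real.exp (-l) * l ^ i))
    have hval : Real.exp (-l) * l ^ i * Real.exp l = l ^ i := by
      rw [Real.exp_neg]; field_simp
    rw [hval] at h
    have hfun : ((fun m : ℕ => Real.exp (-l) * l ^ m / m.factorial * (m.descFactorial i : ℝ)) ∘
        (fun n : ℕ => n + i)) = fun n : ℕ => Real.exp (-l) * l ^ i * (l ^ n / n.factorial) := by
      funext n
      simp only [Function.comp_apply]
      have hdesc : ((n + i).descFactorial i : ℝ)
          = ((n + i).factorial : ℝ) / (n.factorial : ℝ) := by
        rw [Nat.descFactorial_eq_div (Nat.le_add_left i n),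
          show n + i - i = n from by omega,
          Nat.cast_div (Nat.factorial_dvd_factorial (Nat.le_add_right n i))
            (by exact_mod_cast (Nat.factorial_pos n).ne')]
      rw [hdesc, pow_add]
      have h1 : ((n + i).factorial : ℝ) ≠ 0 := by exact_mod_cast (Nat.factorial_pos _).ne'
      have h2 : ((n).factorial : ℝ) ≠ 0 := by exact_mod_cast (Nat.factorial_pos _).ne'
      field_simp
    rw [hfun]
    exact h
  · intro m hm
    have hmi : m < i := by
      by_contra h
      exact hm ⟨m - i, show m - i + i = m from by omega⟩
    simp [Nat.descFactorial_eq_zero_iff_lt.2 hmi]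

theorem stmt_6 (θ t : ℝ) (hθ : 0 < θ) (ht : 0 < t) (k : ℕ) :
    ∑' m : ℕ, Real.exp (-(t * θ)) * (t * θ) ^ m / m.factorial * charlierMoment θ k (m + 1)
      = θ ^ k * ∑ i ∈ Finset.range (k + 1), (k.choose i : ℝ) ^ 2 * t ^ i / (i + 1) := by
  have key : ∀ i ∈ Finset.range (k + 1),
      HasSum (fun m : ℕ => Real.exp (-(t * θ)) * (t * θ) ^ m / m.factorial *
        (θ ^ (k - i) * (k.choose i : ℝ) ^ 2 * ((m + 1 - i).ascFactorial i : ℝ) / (i + 1)))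
        (θ ^ k * ((k.choose i : ℝ) ^ 2 * t ^ i / (i + 1))) := by
    intro i hi
    have hi' : i ≤ k := Nat.lt_succ_iff.mp (Finset.mem_range.mp hi)
    have h := (poisson_hasSum (t * θ) i).mul_left
      (θ ^ (k - i) * (k.choose i : ℝ) ^ 2 / (i + 1))
    have hval : θ ^ (k - i) * (k.choose i : ℝ) ^ 2 / (i + 1) * (t * θ) ^ i
        = θ ^ k * ((k.choose i : ℝ) ^ 2 * t ^ i / (i + 1)) := by
      have hθk : θ ^ k = θ ^ (k - i) * θ ^ i := by
        rw [← pow_add]; congr 1; omega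
      rw [mul_pow, hθk]
      ring
    rw [hval] at h
    convert h using 2 with m
    · rfl
    rw [asc_eq_desc]
    ring
  have hsum : HasSum (fun m : ℕ => Real.exp (-(t * θ)) * (t * θ) ^ m / m.factorial *
      charlierMoment θ k (m + 1))
      (∑ i ∈ Finset.range (k + 1), θ ^ k * ((k.choose i : ℝ) ^ 2 * t ^ i / (i + 1))) := by
    have := hasSum_sum (f := fun i (m : ℕ) => Real.exp (-(t * θ)) * (t * θ) ^ m / m.factorial *
        (θ ^ (k - i) * (k.choose i : ℝ) ^ 2 * ((m + 1 - i).ascFactorial i : ℝ) / (i + 1)))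
      (s := Finset.range (k + 1)) key
    convert this using 2 with m
    rw [charlierMoment, Finset.mul_sum]
  rw [hsum.tsum_eq, Finset.mul_sum]
end

section
/- For 0 < q < 1, natural numbers k and N ≥ 1, the γ=1 Meixner factorial moment satisfies M¹_q(k,N) = (q/(1-q))^k · ∑_{i=0}^{k} q^{-i}·C(k,i)²·(N-i)_{k+1}/(N·(k+1)), where (a)_{k+1} is the rising factorial. -/
open Finset

lemma asc_split (n a : ℕ) : ∀ b, n.ascFactorial (a + b) = n.ascFactorial a * (n + a).ascFactorial b
  | 0 => by simp
  | b + 1 => by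
    rw [← Nat.add_assoc, Nat.ascFactorial_succ, Nat.ascFactorial_succ, asc_split n a b,
      Nat.add_assoc]
    ring

lemma sum_asc (k : ℕ) : ∀ M : ℕ,
    (k + 1) * ∑ j ∈ Finset.range M, (j + 1).ascFactorial k = M.ascFactorial (k + 1)
  | 0 => by simp [Nat.zero_ascFactorial]
  | M + 1 => by
    rw [Finset.sum_range_succ, Nat.mul_add, sum_asc k M, Nat.ascFactorial_succ,
      Nat.ascFactorial_succ]
    have := Nat.succ_ascFactorial M k
    -- M * (M+1).asc k = (M+k) * M.asc k
    -- goal: (M+k) * M.asc k + (k+1) * (M+1).asc k = (M+1+k) * (M+1).asc k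
    rw [← this]
    ring

lemma inner (k N i : ℕ) (hN : 1 ≤ N) (hik : i ≤ k) :
    (1 / (N : ℝ)) * ∑ l ∈ Finset.Icc i (N - 1),
        ((l.factorial : ℝ) / (l - i).factorial) * ((1 + l).ascFactorial (k - i) : ℝ)
      = ((N - i).ascFactorial (k + 1) : ℝ) / (N * (k + 1)) := by
  rcases le_or_gt N i with h | h
  · -- empty sum; N - i = 0
    rw [Finset.Icc_eq_empty (by omega), Finset.sum_empty, Nat.sub_eq_zero_of_le h,
      Nat.zero_ascFactorial]
    simp
  · have hIcc : Finset.Icc i (N - 1) = Finset.Ico i N := by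
      rw [← Finset.Ico_add_one_right_eq_Icc]
      congr 1
      omega
    rw [hIcc, Finset.sum_Ico_eq_sum_range]
    have key : ∀ j ∈ Finset.range (N - i),
        ((i + j).factorial : ℝ) / ((i + j - i).factorial) * ((1 + (i + j)).ascFactorial (k - i) : ℝ)
          = ((j + 1).ascFactorial k : ℝ) := by
      intro j _
      have h1 : i + j - i = j := by omega
      rw [h1]
      have h2 : (i + j).factorial = j.factorial * (j + 1).ascFactorial i := by
        rw [Nat.factorial_mul_ascFactorial, Nat.add_comm]
      have h3 : (j + 1).ascFactorial k
          = (j + 1).ascFactorial i * (j + 1 + i).ascFactorial (k - i) := by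
        rw [← asc_split, Nat.add_sub_cancel' hik]
      have h4 : 1 + (i + j) = j + 1 + i := by omega
      rw [h2, h3, h4]
      push_cast
      field_simp
    rw [Finset.sum_congr rfl key]
    have hsum : ((k : ℝ) + 1) * ∑ j ∈ Finset.range (N - i), ((j + 1).ascFactorial k : ℝ)
        = ((N - i).ascFactorial (k + 1) : ℝ) := by
      exact_mod_cast congrArg (fun n : ℕ => (n : ℝ)) (sum_asc k (N - i))
    have hN' : (N : ℝ) ≠ 0 := by positivity
    have hk1 : (k : ℝ) + 1 ≠ 0 := by positivity
    field_simp
    linear_combination hsum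

theorem stmt_11 (q : ℝ) (hq0 : 0 < q) (hq1 : q < 1) (k N : ℕ) (hN : 1 ≤ N) :
    ∑ i ∈ Finset.range (k + 1),
        (q / (1 - q)) ^ k * q ^ (-(i : ℤ)) * (k.choose i : ℝ) ^ 2 * (1 / N)
          * ∑ l ∈ Finset.Icc i (N - 1),
              ((l.factorial : ℝ) / (l - i).factorial) * ((1 + l).ascFactorial (k - i) : ℝ)
      = (q / (1 - q)) ^ k * ∑ i ∈ Finset.range (k + 1),
          q ^ (-(i : ℤ)) * (k.choose i : ℝ) ^ 2
            * ((N - i).ascFactorial (k + 1) : ℝ) / (N * (k + 1)) := by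
  rw [Finset.mul_sum]
  refine Finset.sum_congr rfl fun i hi => ?_
  have hik : i ≤ k := Nat.lt_succ_iff.mp (Finset.mem_range.mp hi)
  have := inner k N i hN hik
  calc (q / (1 - q)) ^ k * q ^ (-(i : ℤ)) * (k.choose i : ℝ) ^ 2 * (1 / N)
          * ∑ l ∈ Finset.Icc i (N - 1),
              ((l.factorial : ℝ) / (l - i).factorial) * ((1 + l).ascFactorial (k - i) : ℝ)
      = (q / (1 - q)) ^ k * q ^ (-(i : ℤ)) * (k.choose i : ℝ) ^ 2 *
          ((1 / (N : ℝ)) * ∑ l ∈ Finset.Icc i (N - 1),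
              ((l.factorial : ℝ) / (l - i).factorial) * ((1 + l).ascFactorial (k - i) : ℝ)) := by
        ring
    _ = (q / (1 - q)) ^ k *
        (q ^ (-(i : ℤ)) * (k.choose i : ℝ) ^ 2
            * ((N - i).ascFactorial (k + 1) : ℝ) / (N * (k + 1))) := by
        rw [this]; ring
end

section
/- For 0 < q < 1, 0 < t < 1/q, and natural number k: ∑_{m=0}^{∞} (m+1)·(tq)^m·(1-tq)²·M¹_q(k,m+1) = k!·(q/((1-q)(1-tq)))^k·∑_{i=0}^{k} C(k,i)²·t^i, where M¹_q(k,N) = (q/(1-q))^k·∑_{i=0}^{k} q^{-i}·C(k,i)²·(N-i)_{k+1}/(N·(k+1)). -/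
open Finset

/-- The `k`th factorial moment of the Meixner ensemble with `γ = 1`, parameter `q` and `N`
particles. -/
noncomputable def meixnerMoment (q : ℝ) (k N : ℕ) : ℝ :=
  (q / (1 - q)) ^ k * ∑ i ∈ Finset.range (k + 1),
    q ^ (-(i : ℤ)) * (k.choose i : ℝ) ^ 2 * ((N - i).ascFactorial (k + 1) : ℝ) / (N * (k + 1))

lemma hasSumB {x : ℝ} (hx : |x| < 1) (k : ℕ) :
    HasSum (fun m : ℕ ↦ x ^ m * ((m + 1).ascFactorial (k + 1) : ℝ))
      (((k + 1).factorial : ℝ) * (1 / (1 - x) ^ (k + 2))) := by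
  have h := (hasSum_choose_mul_geometric_of_norm_lt_one (k + 1) (r := x)
    (by simpa using hx)).mul_left (((k + 1).factorial : ℝ))
  convert h using 2 with m
  · rfl
  rw [Nat.ascFactorial_eq_factorial_mul_choose]
  push_cast
  ring

lemma hasSumC {x : ℝ} (hx : |x| < 1) (k i : ℕ) :
    HasSum (fun m : ℕ ↦ x ^ m * ((m + 1 - i).ascFactorial (k + 1) : ℝ))
      (x ^ i * (((k + 1).factorial : ℝ) * (1 / (1 - x) ^ (k + 2)))) := by
  have h := (hasSumB hx k).mul_left (x ^ i)
  have h' : HasSum (fun n : ℕ ↦ x ^ (n + i) * (((n + i + 1 - i).ascFactorial (k + 1) : ℝ)))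
      (x ^ i * (((k + 1).factorial : ℝ) * (1 / (1 - x) ^ (k + 2)))) := by
    refine h.congr_fun fun n ↦ ?_
    have : n + i + 1 - i = n + 1 := by omega
    rw [this, pow_add]
    ring
  rw [hasSum_nat_add_iff (f := fun m : ℕ ↦ x ^ m * ((m + 1 - i).ascFactorial (k + 1) : ℝ)) i]
    at h'
  have hz : ∑ j ∈ range i, x ^ j * ((j + 1 - i).ascFactorial (k + 1) : ℝ) = 0 := by
    refine Finset.sum_eq_zero fun j hj ↦ ?_
    rw [Finset.mem_range] at hj
    have : j + 1 - i = 0 := by omega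
    rw [this, Nat.zero_ascFactorial]
    simp
  rwa [hz, add_zero] at h'

theorem stmt_12 (q t : ℝ) (hq0 : 0 < q) (hq1 : q < 1) (ht0 : 0 < t) (ht1 : t < 1 / q)
    (k : ℕ) :
    ∑' m : ℕ, ((m : ℝ) + 1) * (t * q) ^ m * (1 - t * q) ^ 2 * meixnerMoment q k (m + 1)
      = (k.factorial : ℝ) * (q / ((1 - q) * (1 - t * q))) ^ k
          * ∑ i ∈ Finset.range (k + 1), (k.choose i : ℝ) ^ 2 * t ^ i := by
  set x := t * q with hxdef
  have hx0 : 0 < x := mul_pos ht0 hq0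
  have hx1 : x < 1 := by
    rw [lt_div_iff₀ hq0] at ht1; linarith
  have hxabs : |x| < 1 := abs_lt.2 ⟨by linarith, hx1⟩
  have hqne : q ≠ 0 := ne_of_gt hq0
  have h1q : (1 : ℝ) - q ≠ 0 := by linarith [hq1]
  have h1x : (1 : ℝ) - x ≠ 0 := by linarith [hx1]
  have hk1 : ((k : ℝ) + 1) ≠ 0 := by positivity
  set B : ℝ := ((k + 1).factorial : ℝ) * (1 / (1 - x) ^ (k + 2)) with hB
  set A : ℕ → ℝ := fun i ↦
    (q / (1 - q)) ^ k * (q ^ (-(i : ℤ)) * (k.choose i : ℝ) ^ 2 * (1 - x) ^ 2 / ((k : ℝ) + 1))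
    with hA
  have total : HasSum
      (fun m : ℕ ↦ ∑ i ∈ range (k + 1), A i * (x ^ m * ((m + 1 - i).ascFactorial (k + 1) : ℝ)))
      (∑ i ∈ range (k + 1), A i * (x ^ i * B)) :=
    hasSum_sum fun i _ ↦ (hasSumC hxabs k i).mul_left _
  have hfun : ∀ m : ℕ, ((m : ℝ) + 1) * x ^ m * (1 - x) ^ 2 * meixnerMoment q k (m + 1)
      = ∑ i ∈ range (k + 1), A i * (x ^ m * ((m + 1 - i).ascFactorial (k + 1) : ℝ)) := by
    intro m
    have hm : ((m : ℝ) + 1) ≠ 0 := by positivity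
    rw [meixnerMoment, Finset.mul_sum]
    rw [Finset.mul_sum]
    refine Finset.sum_congr rfl fun i _ ↦ ?_
    rw [hA]
    push_cast
    field_simp
  calc ∑' m : ℕ, ((m : ℝ) + 1) * x ^ m * (1 - x) ^ 2 * meixnerMoment q k (m + 1)
      = ∑ i ∈ range (k + 1), A i * (x ^ i * B) := by
        rw [tsum_congr hfun]; exact total.tsum_eq
    _ = (k.factorial : ℝ) * (q / ((1 - q) * (1 - x))) ^ k
          * ∑ i ∈ range (k + 1), (k.choose i : ℝ) ^ 2 * t ^ i := by
        rw [Finset.mul_sum]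
        refine Finset.sum_congr rfl fun i _ ↦ ?_
        simp only [hA, hB, hxdef]
        have hqi : (q : ℝ) ^ (-(i : ℤ)) = (q ^ i)⁻¹ := by
          rw [zpow_neg, zpow_natCast]
        rw [hqi, Nat.factorial_succ]
        have hxq : (t * q) ^ i = t ^ i * q ^ i := mul_pow t q i
        push_cast
        simp only [div_pow, mul_pow]
        have h1tq : (1 : ℝ) - q * t ≠ 0 := by rw [mul_comm]; exact h1x
        have h1tq' : (1 : ℝ) - t * q ≠ 0 := h1x
        field_simp
        ring
end

section
/- For 0 < q < 1 and natural number k, the 2-negative-binomialised γ=1 Meixner factorial moment at t = 1 equals (q^k/(1-q)^{2k})·(k+1)!·C_k, where C_k is the kth Catalan number. -/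
open Finset

lemma sum_choose_sq' (k : ℕ) :
    ∑ i ∈ Finset.range (k + 1), (k.choose i) ^ 2 = (2 * k).choose k := by
  rw [two_mul, Nat.add_choose_eq, Finset.Nat.sum_antidiagonal_eq_sum_range_succ_mk]
  refine Finset.sum_congr rfl fun i hi => ?_
  rw [Nat.choose_symm (Nat.lt_succ_iff.mp (Finset.mem_range.mp hi)), sq]

lemma asc_hasSum (q : ℝ) (hq0 : 0 < q) (hq1 : q < 1) (k i : ℕ) :
    HasSum (fun m : ℕ => ((m + 1 - i).ascFactorial (k + 1) : ℝ) * q ^ m)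
      (((k + 1).factorial : ℝ) * q ^ i / (1 - q) ^ (k + 2)) := by
  have hq : ‖q‖ < 1 := by rw [Real.norm_eq_abs, abs_of_pos hq0]; exact hq1
  have base := (hasSum_choose_mul_geometric_of_norm_lt_one (k + 1) hq).mul_left
      (((k + 1).factorial : ℝ) * q ^ i)
  have h2 : HasSum (fun j : ℕ => ((j + i + 1 - i).ascFactorial (k + 1) : ℝ) * q ^ (j + i))
      (((k + 1).factorial : ℝ) * q ^ i / (1 - q) ^ (k + 2)) := by
    have hval : (((k + 1).factorial : ℝ) * q ^ i / (1 - q) ^ (k + 2))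
        = ((k + 1).factorial : ℝ) * q ^ i * (1 / (1 - q) ^ (k + 1 + 1)) := by ring
    have hfun : (fun j : ℕ => ((j + i + 1 - i).ascFactorial (k + 1) : ℝ) * q ^ (j + i))
        = fun j : ℕ => ((k + 1).factorial : ℝ) * q ^ i
            * (((j + (k + 1)).choose (k + 1) : ℝ) * q ^ j) := by
      funext j
      have hji : j + i + 1 - i = j + 1 := by omega
      rw [hji, Nat.ascFactorial_eq_factorial_mul_choose, pow_add]
      push_cast
      ring
    rw [hval, hfun]
    exact base
  have h3 := (hasSum_nat_add_iff
      (f := fun m : ℕ => ((m + 1 - i).ascFactorial (k + 1) : ℝ) * q ^ m) i).mp h2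
  have hz : ∑ m ∈ Finset.range i, ((m + 1 - i).ascFactorial (k + 1) : ℝ) * q ^ m = 0 := by
    refine Finset.sum_eq_zero fun m hm => ?_
    have hmi : m + 1 - i = 0 := by
      have := Finset.mem_range.mp hm; omega
    rw [hmi, Nat.zero_ascFactorial]
    simp
  rwa [hz, add_zero] at h3

theorem stmt_13 (q : ℝ) (hq0 : 0 < q) (hq1 : q < 1) (k : ℕ) :
    ∑' m : ℕ, ((m : ℝ) + 1) * q ^ m * (1 - q) ^ 2 * meixnerMoment q k (m + 1)
      = q ^ k / (1 - q) ^ (2 * k) * ((k + 1).factorial : ℝ) * (catalan k : ℝ) := by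
  have h1q : (1 : ℝ) - q ≠ 0 := by linarith
  have hqne : q ≠ 0 := ne_of_gt hq0
  set c : ℕ → ℝ := fun i =>
    (1 - q) ^ 2 * (q / (1 - q)) ^ k * q ^ (-(i : ℤ)) * (k.choose i : ℝ) ^ 2 / ((k : ℝ) + 1)
    with hc
  have hterm : ∀ m : ℕ, ((m : ℝ) + 1) * q ^ m * (1 - q) ^ 2 * meixnerMoment q k (m + 1)
      = ∑ i ∈ Finset.range (k + 1),
          c i * (((m + 1 - i).ascFactorial (k + 1) : ℝ) * q ^ m) := by
    intro m
    rw [meixnerMoment, Finset.mul_sum, Finset.mul_sum]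
    refine Finset.sum_congr rfl fun i _ => ?_
    have hm : ((m : ℝ) + 1) ≠ 0 := by positivity
    have hk1 : ((k : ℝ) + 1) ≠ 0 := by positivity
    rw [hc]
    push_cast
    field_simp
  have H := hasSum_sum (s := Finset.range (k + 1))
      (f := fun i (m : ℕ) => c i * (((m + 1 - i).ascFactorial (k + 1) : ℝ) * q ^ m))
      (a := fun i => c i * (((k + 1).factorial : ℝ) * q ^ i / (1 - q) ^ (k + 2)))
      (fun i _ => (asc_hasSum q hq0 hq1 k i).mul_left (c i))
  rw [tsum_congr hterm, H.tsum_eq]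
  have hI : ∀ i ∈ Finset.range (k + 1),
      c i * (((k + 1).factorial : ℝ) * q ^ i / (1 - q) ^ (k + 2))
        = (q ^ k / (1 - q) ^ (2 * k) * (k.factorial : ℝ)) * ((k.choose i : ℝ) ^ 2) := by
    intro i _
    simp only [hc]
    have hz : q ^ (-(i : ℤ)) = (q ^ i)⁻¹ := by
      rw [zpow_neg, zpow_natCast]
    rw [hz, Nat.factorial_succ, div_pow]
    have hqi : q ^ i ≠ 0 := pow_ne_zero _ hqne
    have hk1 : ((k : ℝ) + 1) ≠ 0 := by positivity
    push_cast
    field_simp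
    ring
  rw [Finset.sum_congr rfl hI, ← Finset.mul_sum]
  have hcat : ((k + 1).factorial : ℝ) * (catalan k : ℝ)
      = (k.factorial : ℝ) * ((2 * k).choose k : ℝ) := by
    have h := succ_mul_catalan_eq_centralBinom k
    rw [Nat.centralBinom_eq_two_mul_choose] at h
    rw [Nat.factorial_succ]
    push_cast [← h]
    ring
  have hsq : ∑ i ∈ Finset.range (k + 1), ((k.choose i : ℝ)) ^ 2
      = (((2 * k).choose k : ℕ) : ℝ) := by
    rw [← sum_choose_sq' k]
    push_cast
    ring
  rw [hsq, mul_assoc]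
  linear_combination -(q ^ k / (1 - q) ^ (2 * k)) * hcat
end

section
/- For real h > 0 and natural number k: ∫_0^1 ∫_{-1}^1 (u + 2√(uh)·s + h)^k · (1/(π√(1-s²))) ds du = h^k · ∑_{m=0}^{k} C(k,m)²·h^{-m}/(m+1). -/
open Real Finset MeasureTheory Set Complex intervalIntegral

lemma arcsine_integrable : IntegrableOn (fun s : ℝ => 1 / Real.sqrt (1 - s ^ 2)) (Set.Icc (-1) 1) := by
  rw [integrableOn_Icc_iff_integrableOn_Ioo]
  have H := integrableOn_deriv_of_nonneg (g := Real.arcsin)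
    (g' := fun s : ℝ => 1 / Real.sqrt (1 - s ^ 2)) (a := -1) (b := 1)
    Real.continuous_arcsin.continuousOn
    (fun x hx => Real.hasDerivAt_arcsin (ne_of_gt hx.1) (ne_of_lt hx.2))
    (fun x _ => by positivity)
  exact H.mono_set Ioo_subset_Ioc_self

lemma exp_pow_int (m n : ℕ) :
    (∫ x in (0:ℝ)..(2*π), Complex.exp (x*Complex.I)^m * Complex.exp (-(x*Complex.I))^n)
      = if m = n then (2*π:ℂ) else 0 := by
  have hrw : ∀ x : ℝ, Complex.exp (x*Complex.I)^m * Complex.exp (-(x*Complex.I))^n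
      = Complex.exp ((((m:ℂ)-n)*Complex.I) * x) := by
    intro x
    rw [← Complex.exp_nat_mul, ← Complex.exp_nat_mul, ← Complex.exp_add]
    congr 1
    ring
  simp only [hrw]
  by_cases hmn : m = n
  · subst hmn
    simp
  · have hc : (((m:ℂ)-n)*Complex.I) ≠ 0 := by
      simp only [ne_eq, mul_eq_zero, Complex.I_ne_zero, or_false, sub_eq_zero]
      exact_mod_cast hmn
    rw [integral_exp_mul_complex hc, if_neg hmn]
    have h1 : (((m:ℂ)-n)*Complex.I) * ((2*π:ℝ):ℂ) = (((m:ℤ)-(n:ℤ) : ℤ) : ℂ) * (2*π*Complex.I) := by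
      push_cast; ring
    rw [h1, Complex.exp_int_mul_two_pi_mul_I]
    simp

lemma key_complex (z w : ℝ) (k : ℕ) :
    (∫ x in (0:ℝ)..(2*π), ((z:ℂ)*Complex.exp (x*Complex.I) + w)^k
        * ((z:ℂ)*Complex.exp (-(x*Complex.I)) + w)^k)
      = 2*π* ∑ m ∈ Finset.range (k+1),
          (k.choose m : ℂ)^2 * (z:ℂ)^(2*m) * (w:ℂ)^(2*(k-m)) := by
  have hcont : ∀ m n : ℕ, Continuous (fun x : ℝ =>
      ((k.choose m : ℂ) * (k.choose n) * (z:ℂ)^(m+n) * (w:ℂ)^((k-m)+(k-n))) *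
        (Complex.exp (x*Complex.I)^m * Complex.exp (-(x*Complex.I))^n)) := by
    intro m n
    apply continuous_const.mul
    apply Continuous.mul
    · exact (Complex.continuous_exp.comp ((Complex.continuous_ofReal).mul continuous_const)).pow m
    · exact (Complex.continuous_exp.comp
        ((Complex.continuous_ofReal).mul continuous_const).neg).pow n
  have expand : ∀ x : ℝ,
      ((z:ℂ)*Complex.exp (x*Complex.I) + w)^k * ((z:ℂ)*Complex.exp (-(x*Complex.I)) + w)^k
      = ∑ m ∈ Finset.range (k+1), ∑ n ∈ Finset.range (k+1),
        ((k.choose m : ℂ) * (k.choose n) * (z:ℂ)^(m+n) * (w:ℂ)^((k-m)+(k-n))) *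
          (Complex.exp (x*Complex.I)^m * Complex.exp (-(x*Complex.I))^n) := by
    intro x
    rw [add_pow, add_pow, Finset.sum_mul_sum]
    refine Finset.sum_congr rfl fun m hm => Finset.sum_congr rfl fun n hn => ?_
    ring
  simp only [expand]
  rw [intervalIntegral.integral_finset_sum (fun m _ =>
    ((continuous_finset_sum _ (fun n _ => hcont m n)).intervalIntegrable _ _))]
  have step : ∀ m ∈ Finset.range (k+1),
      (∫ x in (0:ℝ)..2*π, ∑ n ∈ Finset.range (k+1),
        ((k.choose m : ℂ) * (k.choose n) * (z:ℂ)^(m+n) * (w:ℂ)^((k-m)+(k-n))) *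
          (Complex.exp (x*Complex.I)^m * Complex.exp (-(x*Complex.I))^n))
      = 2*π * ((k.choose m : ℂ)^2 * (z:ℂ)^(2*m) * (w:ℂ)^(2*(k-m))) := by
    intro m hm
    rw [intervalIntegral.integral_finset_sum (fun n _ => (hcont m n).intervalIntegrable _ _)]
    have h2 : ∀ n ∈ Finset.range (k+1),
        (∫ x in (0:ℝ)..2*π,
          ((k.choose m : ℂ) * (k.choose n) * (z:ℂ)^(m+n) * (w:ℂ)^((k-m)+(k-n))) *
            (Complex.exp (x*Complex.I)^m * Complex.exp (-(x*Complex.I))^n))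
        = ((k.choose m : ℂ) * (k.choose n) * (z:ℂ)^(m+n) * (w:ℂ)^((k-m)+(k-n))) *
            (if m = n then (2*π:ℂ) else 0) := by
      intro n _
      rw [intervalIntegral.integral_const_mul, exp_pow_int]
    rw [Finset.sum_congr rfl h2]
    simp only [mul_ite, mul_zero]
    rw [Finset.sum_ite_eq (Finset.range (k+1)) m
      (fun n => ((k.choose m : ℂ) * (k.choose n) * (z:ℂ)^(m+n) * (w:ℂ)^((k-m)+(k-n))) * (2*π:ℂ)),
      if_pos hm]
    rw [← two_mul m, ← two_mul (k-m)]
    ring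
  rw [Finset.sum_congr rfl step, ← Finset.mul_sum]

lemma key_real (z w : ℝ) (k : ℕ) :
    ∫ x in (0:ℝ)..(2*π), (z^2 + 2*z*w*Real.cos x + w^2)^k
      = 2*π* ∑ m ∈ Finset.range (k+1), (k.choose m : ℝ)^2 * z^(2*m) * w^(2*(k-m)) := by
  have hbase : ∀ x : ℝ, (((z:ℂ)^2 + 2*(z:ℂ)*(w:ℂ)*Complex.cos (x:ℂ) + (w:ℂ)^2))^k
      = ((z:ℂ)*Complex.exp (x*Complex.I) + w)^k
        * ((z:ℂ)*Complex.exp (-(x*Complex.I)) + w)^k := by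
    intro x
    rw [← mul_pow]
    congr 1
    rw [show -((x:ℂ)*Complex.I) = ((-x:ℝ):ℂ)*Complex.I by push_cast; ring]
    rw [Complex.exp_mul_I, Complex.exp_mul_I]
    push_cast
    simp only [Complex.cos_neg, Complex.sin_neg]
    linear_combination (-(z:ℂ)^2) * Complex.sin_sq_add_cos_sq (x:ℂ)
      + ((z:ℂ)^2 * Complex.sin (x:ℂ)^2) * Complex.I_sq
  have key := key_complex z w k
  have hL : (((∫ x in (0:ℝ)..(2*π), (z^2 + 2*z*w*Real.cos x + w^2)^k) : ℝ) : ℂ)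
      = 2*π* ∑ m ∈ Finset.range (k+1), (k.choose m : ℂ)^2 * (z:ℂ)^(2*m) * (w:ℂ)^(2*(k-m)) := by
    rw [← key, ← intervalIntegral.integral_ofReal]
    apply intervalIntegral.integral_congr
    intro x _
    push_cast
    exact hbase x
  push_cast at hL
  exact_mod_cast hL

lemma subst_cos (F : ℝ → ℝ) (hF : Continuous F) :
    ∫ s in (-1:ℝ)..1, F s * (1 / Real.sqrt (1 - s ^ 2))
      = ∫ x in (0:ℝ)..π, F (Real.cos x) := by
  set g : ℝ → ℝ := fun s => F s * (1 / Real.sqrt (1 - s ^ 2)) with hg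
  have hpi := Real.pi_pos
  have huIcc : Set.uIcc (0:ℝ) π = Set.Icc 0 π := uIcc_of_le hpi.le
  have hminmax : min (0:ℝ) π = 0 ∧ max (0:ℝ) π = π := ⟨min_eq_left hpi.le, max_eq_right hpi.le⟩
  have himg : Real.cos '' Set.Ioo 0 π ⊆ Set.Ioo (-1) 1 := by
    rintro y ⟨x, hx, rfl⟩
    constructor
    · have := Real.strictAntiOn_cos ⟨hx.1.le, hx.2.le⟩ ⟨le_refl 0 |>.trans hpi.le, le_refl π⟩ hx.2
      simpa [Real.cos_pi] using this
    · have := Real.strictAntiOn_cos (Set.left_mem_Icc.mpr hpi.le) ⟨hx.1.le, hx.2.le⟩ hx.1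
      simpa [Real.cos_zero] using this
  have hsqrt_cont : Continuous (fun s : ℝ => Real.sqrt (1 - s ^ 2)) :=
    (continuous_const.sub (continuous_pow 2)).sqrt
  have hg_cont : ContinuousOn g (Set.Ioo (-1 : ℝ) 1) := by
    apply (hF.continuousOn).mul
    apply ContinuousOn.div continuousOn_const hsqrt_cont.continuousOn
    intro s hs
    have : (0:ℝ) < 1 - s ^ 2 := by nlinarith [hs.1, hs.2]
    positivity
  have hgInt : IntegrableOn g (Set.Icc (-1 : ℝ) 1) := by
    obtain ⟨C, hC⟩ := (isCompact_Icc (a := (-1:ℝ)) (b := 1)).exists_bound_of_continuousOn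
      hF.continuousOn
    apply MeasureTheory.Integrable.bdd_mul (c := C) arcsine_integrable
      (hF.aestronglyMeasurable.restrict)
    exact (MeasureTheory.ae_restrict_iff' measurableSet_Icc).mpr (Filter.Eventually.of_forall hC)
  have hcosimg : Real.cos '' Set.uIcc (0:ℝ) π ⊆ Set.Icc (-1) 1 := by
    rintro y ⟨x, _, rfl⟩
    exact ⟨Real.neg_one_le_cos x, Real.cos_le_one x⟩
  have key := intervalIntegral.integral_comp_smul_deriv''' (a := 0) (b := π)
    (f := Real.cos) (f' := fun x => -Real.sin x) (g := g)
    Real.continuous_cos.continuousOn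
    (fun x _ => (Real.hasDerivAt_cos x).hasDerivWithinAt)
    (by rw [hminmax.1, hminmax.2]; exact hg_cont.mono himg)
    (hgInt.mono_set hcosimg)
    (by
      rw [huIcc, integrableOn_Icc_iff_integrableOn_Ioo]
      have hbase : IntegrableOn (fun x => -(F (Real.cos x))) (Set.Ioo 0 π)
          MeasureTheory.volume :=
        (((hF.comp Real.continuous_cos).neg).continuousOn.integrableOn_compact
          (isCompact_Icc (a := (0:ℝ)) (b := π))).mono_set Set.Ioo_subset_Icc_self
      refine hbase.congr_fun ?_ measurableSet_Ioo
      intro x hx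
      have hsin : 0 < Real.sin x := Real.sin_pos_of_pos_of_lt_pi hx.1 hx.2
      have h1 : Real.sqrt (1 - Real.cos x ^ 2) = Real.sin x := by
        rw [← Real.sin_sq x, Real.sqrt_sq hsin.le]
      simp only [g, Function.comp, smul_eq_mul, h1]
      field_simp)
  rw [Real.cos_zero, Real.cos_pi] at key
  have hπae : ∀ᵐ (x : ℝ), x ≠ π := by
    rw [MeasureTheory.ae_iff]
    set_option linter.unnecessarySimpa false in
    simpa using MeasureTheory.measure_singleton (α := ℝ) (μ := MeasureTheory.volume) π
  have hL : (∫ x in (0:ℝ)..π, (fun x => -Real.sin x) x • (g ∘ Real.cos) x)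
      = ∫ x in (0:ℝ)..π, -(F (Real.cos x)) := by
    apply intervalIntegral.integral_congr_ae
    filter_upwards [hπae] with x hxπ hx
    rw [Set.uIoc_of_le hpi.le] at hx
    have hx' : x ∈ Set.Ioo 0 π := ⟨hx.1, lt_of_le_of_ne hx.2 hxπ⟩
    have hsin : 0 < Real.sin x := Real.sin_pos_of_pos_of_lt_pi hx'.1 hx'.2
    have h1 : Real.sqrt (1 - Real.cos x ^ 2) = Real.sin x := by
      rw [← Real.sin_sq x, Real.sqrt_sq hsin.le]
    simp only [g, Function.comp, smul_eq_mul, h1]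
    field_simp
  rw [hL, intervalIntegral.integral_neg,
    intervalIntegral.integral_symm (-1 : ℝ) 1] at key
  simp only [hg] at key ⊢
  linarith [key]

lemma half_cos (F : ℝ → ℝ) (hF : Continuous F) :
    ∫ x in (0:ℝ)..(2*π), F (Real.cos x) = 2 * ∫ x in (0:ℝ)..π, F (Real.cos x) := by
  have hint : ∀ a b : ℝ, IntervalIntegrable (fun x => F (Real.cos x)) MeasureTheory.volume a b :=
    fun a b => (hF.comp Real.continuous_cos).intervalIntegrable a b
  have h1 : (∫ x in (0:ℝ)..π, F (Real.cos x)) + ∫ x in π..(2*π), F (Real.cos x)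
      = ∫ x in (0:ℝ)..(2*π), F (Real.cos x) :=
    intervalIntegral.integral_add_adjacent_intervals (hint 0 π) (hint π (2*π))
  have h2 : (∫ x in π..(2*π), F (Real.cos x)) = ∫ x in (0:ℝ)..π, F (Real.cos x) := by
    have h3 := intervalIntegral.integral_comp_sub_left (a := (0:ℝ)) (b := π)
      (fun x => F (Real.cos x)) (2*π)
    simp only [Real.cos_two_pi_sub] at h3
    norm_num at h3
    have he : 2*π - π = π := by ring
    rw [he] at h3
    linarith
  linarith

lemma inner_val (h : ℝ) (hh : 0 < h) (k : ℕ) (u : ℝ) (hu : 0 ≤ u) :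
    ∫ s in (-1:ℝ)..1, (u + 2 * Real.sqrt (u * h) * s + h) ^ k * (1 / (π * Real.sqrt (1 - s ^ 2)))
      = ∑ m ∈ Finset.range (k+1), (k.choose m : ℝ)^2 * u^m * h^(k-m) := by
  have hpi := Real.pi_pos
  set F : ℝ → ℝ := fun s => (u + 2 * Real.sqrt (u * h) * s + h) ^ k with hFdef
  have hF : Continuous F := by
    apply Continuous.pow
    exact (continuous_const.add ((continuous_const.mul continuous_id))).add continuous_const
  have hsplit : ∀ s : ℝ, F s * (1 / (π * Real.sqrt (1 - s ^ 2)))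
      = (1/π) * (F s * (1 / Real.sqrt (1 - s ^ 2))) := by
    intro s
    simp only [one_div, mul_inv]
    ring
  rw [intervalIntegral.integral_congr (g := fun s => (1/π) * (F s * (1 / Real.sqrt (1 - s ^ 2))))
    (fun s _ => hsplit s), intervalIntegral.integral_const_mul, subst_cos F hF]
  have hFcos : ∀ x : ℝ, F (Real.cos x)
      = ((Real.sqrt u)^2 + 2*(Real.sqrt u)*(Real.sqrt h)*Real.cos x + (Real.sqrt h)^2)^k := by
    intro x
    simp only [hFdef]
    rw [Real.sq_sqrt hu, Real.sq_sqrt hh.le, Real.sqrt_mul hu]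
    ring
  have h2 : (∫ x in (0:ℝ)..π, F (Real.cos x))
      = π * ∑ m ∈ Finset.range (k+1),
          (k.choose m : ℝ)^2 * (Real.sqrt u)^(2*m) * (Real.sqrt h)^(2*(k-m)) := by
    have hhalf := half_cos F hF
    rw [intervalIntegral.integral_congr (a := (0:ℝ)) (b := 2*π) (g := fun x =>
        ((Real.sqrt u)^2 + 2*(Real.sqrt u)*(Real.sqrt h)*Real.cos x + (Real.sqrt h)^2)^k)
        (fun x _ => hFcos x), key_real (Real.sqrt u) (Real.sqrt h) k] at hhalf
    linarith
  rw [h2]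
  have h3 : ∀ m, (Real.sqrt u)^(2*m) = u^m := by
    intro m; rw [pow_mul, Real.sq_sqrt hu]
  have h4 : ∀ m, (Real.sqrt h)^(2*m) = h^m := by
    intro m; rw [pow_mul, Real.sq_sqrt hh.le]
  simp only [h3, h4]
  rw [← mul_assoc, one_div_mul_cancel hpi.ne', one_mul]

theorem stmt_14 (h : ℝ) (hh : 0 < h) (k : ℕ) :
    ∫ u in (0:ℝ)..1, ∫ s in (-1:ℝ)..1,
        (u + 2 * Real.sqrt (u * h) * s + h) ^ k * (1 / (π * Real.sqrt (1 - s ^ 2)))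
      = h ^ k * ∑ m ∈ Finset.range (k + 1),
          (k.choose m : ℝ) ^ 2 * h ^ (-(m : ℤ)) / (m + 1) := by
  rw [intervalIntegral.integral_congr (g := fun u =>
      ∑ m ∈ Finset.range (k+1), (k.choose m : ℝ)^2 * u^m * h^(k-m))
      (fun u hu => by
        rw [Set.uIcc_of_le (by norm_num : (0:ℝ) ≤ 1)] at hu
        exact inner_val h hh k u hu.1)]
  rw [intervalIntegral.integral_finset_sum (f := fun m u => (k.choose m : ℝ)^2 * u^m * h^(k-m)) (fun m _ =>
    ((continuous_const.mul (continuous_pow m)).mul continuous_const).intervalIntegrable 0 1)]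
  have hterm : ∀ m ∈ Finset.range (k+1),
      (∫ u in (0:ℝ)..1, (k.choose m : ℝ)^2 * u^m * h^(k-m))
        = h ^ k * ((k.choose m : ℝ)^2 * h ^ (-(m:ℤ)) / (m+1)) := by
    intro m hm
    have hmk : m ≤ k := Nat.lt_succ_iff.mp (Finset.mem_range.mp hm)
    have : (fun u : ℝ => (k.choose m : ℝ)^2 * u^m * h^(k-m))
        = fun u : ℝ => ((k.choose m : ℝ)^2 * h^(k-m)) * u^m := by
      funext u; ring
    rw [this, intervalIntegral.integral_const_mul, integral_pow]
    have hz : h ^ (-(m:ℤ)) = (h^m)⁻¹ := by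
      rw [zpow_neg, zpow_natCast]
    have hps : h ^ (k - m) = h ^ k * (h ^ m)⁻¹ := pow_sub₀ h hh.ne' hmk
    rw [hz, hps]
    have hm1 : ((m:ℝ) + 1) ≠ 0 := by positivity
    field_simp
    ring
  rw [Finset.sum_congr rfl hterm, ← Finset.mul_sum]
end

section
/- For 0 < q < 1 and natural number k: ∫_0^1 ∫_{-1}^1 (u(1+q+2√q·s)/(1-q))^k · (1/(π√(1-s²))) ds du = (1/(k+1))·(q/(1-q))^k·∑_{j=0}^{k} C(k,j)²·q^{-j}. -/
open Real Finset

private lemma lemA15 (n : ℤ) : ∫ θ in (0:ℝ)..π, Real.cos (n * θ) = if n = 0 then π else 0 := by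
  rcases eq_or_ne n 0 with h | h
  · simp [h]
  · have hc : (n:ℝ) ≠ 0 := Int.cast_ne_zero.mpr h
    rw [if_neg h]
    have := intervalIntegral.integral_comp_mul_left (a := (0:ℝ)) (b := π) (fun x => Real.cos x) hc
    rw [this]
    simp [integral_cos, Real.sin_int_mul_pi]

private lemma lemB15 (r θ : ℝ) (k : ℕ) :
    (1 + r^2 + 2*r*Real.cos θ)^k
      = ∑ a ∈ range (k+1), ∑ b ∈ range (k+1),
          (k.choose a : ℝ) * (k.choose b) * r^(a+b) * Real.cos ((((a:ℤ)-(b:ℤ)):ℝ) * θ) := by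
  have key : ((1 + r^2 + 2*r*Real.cos θ : ℝ) : ℂ)^k
      = ∑ a ∈ range (k+1), ∑ b ∈ range (k+1),
          (((k.choose a : ℝ) * (k.choose b) * r^(a+b) : ℝ) : ℂ)
            * Complex.exp (((((a:ℤ)-(b:ℤ)):ℝ) * θ : ℝ) * Complex.I) := by
    set z : ℂ := Complex.exp (θ * Complex.I) with hzdef
    set w : ℂ := Complex.exp (-(θ:ℝ) * Complex.I) with hwdef
    have hzw : z * w = 1 := by
      rw [hzdef, hwdef, ← Complex.exp_add]
      ring_nf
      exact Complex.exp_zero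
    have hsum : z + w = 2 * (Real.cos θ : ℂ) := by
      rw [hzdef, hwdef, Complex.ofReal_cos, Complex.cos]
      ring
    have hbase : ((1 + r^2 + 2*r*Real.cos θ : ℝ) : ℂ) = ((r:ℂ)*z + 1) * ((r:ℂ)*w + 1) := by
      have : ((r:ℂ)*z + 1) * ((r:ℂ)*w + 1) = 1 + r^2 * (z*w) + r*(z+w) := by ring
      rw [this, hzw, hsum]
      push_cast
      ring
    rw [hbase, mul_pow, add_pow, add_pow]
    rw [Finset.sum_mul_sum]
    refine Finset.sum_congr rfl fun a ha => Finset.sum_congr rfl fun b hb => ?_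
    have hz : z ^ a = Complex.exp (((a:ℝ) * θ : ℝ) * Complex.I) := by
      rw [hzdef, ← Complex.exp_nat_mul]; congr 1; push_cast; ring
    have hw : w ^ b = Complex.exp ((-((b:ℝ) * θ) : ℝ) * Complex.I) := by
      rw [hwdef, ← Complex.exp_nat_mul]; congr 1; push_cast; ring
    rw [one_pow, one_pow, mul_pow, mul_pow, hz, hw, mul_one, mul_one]
    rw [show ((r:ℂ)^a * Complex.exp ((((a:ℝ)*θ : ℝ):ℂ)*Complex.I) * (k.choose a : ℂ)) *
        ((r:ℂ)^b * Complex.exp (((-((b:ℝ)*θ) : ℝ):ℂ)*Complex.I) * (k.choose b : ℂ))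
        = ((k.choose a : ℂ) * (k.choose b) * (r:ℂ)^(a+b)) *
          (Complex.exp ((((a:ℝ)*θ : ℝ):ℂ)*Complex.I) *
            Complex.exp (((-((b:ℝ)*θ) : ℝ):ℂ)*Complex.I)) by
      rw [pow_add]; ring]
    rw [← Complex.exp_add]
    push_cast
    ring_nf
  have h := congrArg Complex.re key
  rw [← Complex.ofReal_pow, Complex.ofReal_re, Complex.re_sum] at h
  rw [h]
  refine Finset.sum_congr rfl fun a _ => ?_
  rw [Complex.re_sum]
  refine Finset.sum_congr rfl fun b _ => ?_
  rw [Complex.re_ofReal_mul, Complex.exp_ofReal_mul_I_re]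

private lemma lemC15 (q : ℝ) (hq0 : 0 ≤ q) (k : ℕ) :
    ∫ θ in (0:ℝ)..π, (1 + q + 2 * Real.sqrt q * Real.cos θ) ^ k
      = π * ∑ j ∈ range (k+1), (k.choose j : ℝ)^2 * q^j := by
  set r := Real.sqrt q with hr
  have hr2 : r^2 = q := Real.sq_sqrt hq0
  have h1 : ∀ θ : ℝ, (1 + q + 2 * r * Real.cos θ) ^ k
      = ∑ a ∈ range (k+1), ∑ b ∈ range (k+1),
          (k.choose a : ℝ) * (k.choose b) * r^(a+b) * Real.cos ((((a:ℤ)-(b:ℤ)):ℝ) * θ) := by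
    intro θ; rw [← hr2]; exact lemB15 r θ k
  calc ∫ θ in (0:ℝ)..π, (1 + q + 2 * r * Real.cos θ) ^ k
      = ∫ θ in (0:ℝ)..π, ∑ a ∈ range (k+1), ∑ b ∈ range (k+1),
          (k.choose a : ℝ) * (k.choose b) * r^(a+b) * Real.cos ((((a:ℤ)-(b:ℤ)):ℝ) * θ) := by
        exact intervalIntegral.integral_congr fun θ _ => h1 θ
    _ = ∑ a ∈ range (k+1), ∑ b ∈ range (k+1),
          (k.choose a : ℝ) * (k.choose b) * r^(a+b) *
            ∫ θ in (0:ℝ)..π, Real.cos ((((a:ℤ)-(b:ℤ)):ℝ) * θ) := by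
        rw [intervalIntegral.integral_finset_sum]
        · refine Finset.sum_congr rfl fun a _ => ?_
          rw [intervalIntegral.integral_finset_sum]
          · exact Finset.sum_congr rfl fun b _ => intervalIntegral.integral_const_mul _ _
          · intro b _
            exact (Continuous.intervalIntegrable (by continuity) _ _)
        · intro a _
          refine Continuous.intervalIntegrable ?_ _ _
          exact continuous_finset_sum _ fun b _ => by continuity
    _ = ∑ a ∈ range (k+1), ∑ b ∈ range (k+1),
          (k.choose a : ℝ) * (k.choose b) * r^(a+b) *
            (if ((a:ℤ)-(b:ℤ)) = 0 then π else 0) := by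
        refine Finset.sum_congr rfl fun a _ => Finset.sum_congr rfl fun b _ => ?_
        rw [show ∫ θ in (0:ℝ)..π, Real.cos ((((a:ℤ)-(b:ℤ)):ℝ) * θ)
            = ∫ θ in (0:ℝ)..π, Real.cos ((((a:ℤ)-(b:ℤ)):ℤ) * θ) by
          push_cast; simp only [sub_mul]]
        rw [lemA15]
    _ = π * ∑ j ∈ range (k+1), (k.choose j : ℝ)^2 * q^j := by
        rw [Finset.mul_sum]
        refine Finset.sum_congr rfl fun a ha => ?_
        rw [Finset.sum_eq_single a]
        · simp only [sub_self, if_pos]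
          rw [← two_mul, pow_mul, hr2]
          ring
        · intro b _ hb
          rw [if_neg (by omega), mul_zero]
        · intro h; exact absurd ha h

private lemma lemD15 (q : ℝ) (hq0 : 0 ≤ q) (k : ℕ) :
    ∫ s in (-1:ℝ)..1, (1 + q + 2 * Real.sqrt q * s) ^ k * (1 / (π * Real.sqrt (1 - s ^ 2)))
      = ∑ j ∈ range (k+1), (k.choose j : ℝ)^2 * q^j := by
  set g : ℝ → ℝ := fun s => (1 + q + 2 * Real.sqrt q * s) ^ k * (1 / (π * Real.sqrt (1 - s ^ 2)))
    with hg
  have himg : Real.cos '' Set.Ioo 0 π = Set.Ioo (-1 : ℝ) 1 := by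
    ext s
    constructor
    · rintro ⟨θ, hθ, rfl⟩
      have h1 : Real.cos θ < Real.cos 0 :=
        Real.strictAntiOn_cos ⟨le_rfl, Real.pi_pos.le⟩ ⟨hθ.1.le, hθ.2.le⟩ hθ.1
      have h2 : Real.cos π < Real.cos θ :=
        Real.strictAntiOn_cos ⟨hθ.1.le, hθ.2.le⟩ ⟨Real.pi_pos.le, le_rfl⟩ hθ.2
      rw [Real.cos_zero] at h1; rw [Real.cos_pi] at h2
      exact ⟨h2, h1⟩
    · rintro ⟨h1, h2⟩
      refine ⟨Real.arccos s, ⟨Real.arccos_pos.2 h2, ?_⟩, Real.cos_arccos h1.le h2.le⟩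
      exact lt_of_le_of_ne (Real.arccos_le_pi s)
        (fun h => absurd (Real.arccos_eq_pi.mp h) (not_le.mpr h1))
  have hinj : Set.InjOn Real.cos (Set.Ioo 0 π) := Real.injOn_cos.mono Set.Ioo_subset_Icc_self
  have hderiv : ∀ θ ∈ Set.Ioo (0:ℝ) π,
      HasDerivWithinAt Real.cos (-Real.sin θ) (Set.Ioo 0 π) θ :=
    fun θ _ => (Real.hasDerivAt_cos θ).hasDerivWithinAt
  have hchg := MeasureTheory.integral_image_eq_integral_abs_deriv_smul
    measurableSet_Ioo hderiv hinj g
  rw [himg] at hchg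
  have heqon : Set.EqOn (fun θ => |(-Real.sin θ)| • g (Real.cos θ))
      (fun θ => (1 + q + 2 * Real.sqrt q * Real.cos θ) ^ k * (1/π)) (Set.Ioo 0 π) := by
    intro θ hθ
    have hsin : 0 < Real.sin θ := Real.sin_pos_of_pos_of_lt_pi hθ.1 hθ.2
    have hsqrt : Real.sqrt (1 - Real.cos θ ^ 2) = Real.sin θ := by
      rw [← Real.sin_sq, Real.sqrt_sq hsin.le]
    simp only [g, smul_eq_mul, abs_neg, abs_of_pos hsin, hsqrt]
    field_simp
  rw [intervalIntegral.integral_of_le (by norm_num : (-1:ℝ) ≤ 1),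
    MeasureTheory.integral_Ioc_eq_integral_Ioo, hchg,
    MeasureTheory.setIntegral_congr_fun measurableSet_Ioo heqon,
    ← MeasureTheory.integral_Ioc_eq_integral_Ioo,
    ← intervalIntegral.integral_of_le Real.pi_pos.le,
    intervalIntegral.integral_mul_const, lemC15 q hq0 k]
  field_simp

theorem stmt_15 (q : ℝ) (hq0 : 0 < q) (hq1 : q < 1) (k : ℕ) :
    ∫ u in (0:ℝ)..1, ∫ s in (-1:ℝ)..1,
        (u * (1 + q + 2 * Real.sqrt q * s) / (1 - q)) ^ k
          * (1 / (π * Real.sqrt (1 - s ^ 2)))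
      = (1 / ((k : ℝ) + 1)) * (q / (1 - q)) ^ k
          * ∑ j ∈ Finset.range (k + 1), (k.choose j : ℝ) ^ 2 * q ^ (-(j : ℤ)) := by
  set S : ℝ := ∑ j ∈ range (k+1), (k.choose j : ℝ)^2 * q^j with hS
  have hinner : ∀ u : ℝ, (∫ s in (-1:ℝ)..1,
      (u * (1 + q + 2 * Real.sqrt q * s) / (1 - q)) ^ k * (1 / (π * Real.sqrt (1 - s ^ 2))))
      = (u^k * ((1-q)⁻¹)^k) * S := by
    intro u
    have hfun : ∀ s : ℝ, (u * (1 + q + 2 * Real.sqrt q * s) / (1 - q)) ^ k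
          * (1 / (π * Real.sqrt (1 - s ^ 2)))
        = (u^k * ((1-q)⁻¹)^k) *
            ((1 + q + 2 * Real.sqrt q * s) ^ k * (1 / (π * Real.sqrt (1 - s ^ 2)))) := by
      intro s
      rw [div_eq_mul_inv, mul_pow, mul_pow]
      ring
    rw [intervalIntegral.integral_congr (fun s _ => hfun s),
      intervalIntegral.integral_const_mul, lemD15 q hq0.le k]
  rw [intervalIntegral.integral_congr (fun u _ => hinner u)]
  have : (fun u : ℝ => (u^k * ((1-q)⁻¹)^k) * S)
      = fun u : ℝ => u^k * (((1-q)⁻¹)^k * S) := by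
    funext u; ring
  rw [this, intervalIntegral.integral_mul_const, integral_pow]
  have hq1' : (1:ℝ) - q ≠ 0 := by linarith
  have hqk : q^k ≠ 0 := pow_ne_zero _ hq0.ne'
  have hsum : ∑ j ∈ range (k+1), (k.choose j : ℝ)^2 * q ^ (-(j:ℤ)) = (q^k)⁻¹ * S := by
    rw [hS, Finset.mul_sum,
      ← Finset.sum_range_reflect (fun j => (q^k)⁻¹ * ((k.choose j:ℝ)^2 * q^j)) (k+1)]
    refine Finset.sum_congr rfl fun j hj => ?_
    have hjk : j ≤ k := Nat.lt_succ_iff.mp (Finset.mem_range.mp hj)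
    simp only [Nat.add_sub_cancel]
    have hpow : (q:ℝ)^(k-j) * q^j = q^k := by rw [← pow_add]; congr 1; omega
    rw [zpow_neg, zpow_natCast, Nat.choose_symm hjk]
    field_simp
    rw [← hpow]
    ring
  rw [hsum, div_pow]
  have hk : ((k:ℝ)+1) ≠ 0 := by positivity
  field_simp
  rw [one_pow, zero_pow (Nat.succ_ne_zero k), sub_zero, one_mul, one_div, inv_pow,
    mul_comm _ S, mul_assoc, inv_mul_cancel₀ (pow_ne_zero k hq1'), mul_one]
end

section
/- For natural numbers k, m with m ≤ k: C(k,m)·C(k,k−m) = ∑_{j=0}^{min(m,k−m)} C(m,j)·C(k−j,k−m−j)·C(k,k−j). -/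
open Finset

theorem stmt_17 (k m : ℕ) (hm : m ≤ k) :
    k.choose m * k.choose (k - m)
      = ∑ j ∈ Finset.range (min m (k - m) + 1),
          m.choose j * (k - j).choose (k - m - j) * k.choose (k - j) := by
  have key : ∀ j ∈ Finset.range (min m (k - m) + 1),
      m.choose j * (k - j).choose (k - m - j) * k.choose (k - j)
        = k.choose m * (m.choose j * (k - m).choose j) := by
    intro j hj
    simp only [Finset.mem_range, Nat.lt_succ_iff, le_min_iff] at hj
    obtain ⟨hjm, hjk⟩ := hj
    have h1 : (k - j).choose (k - m - j) = (k - j).choose m := by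
      rw [show k - m - j = (k - j) - m by omega, Nat.choose_symm (by omega)]
    have h2 : k.choose (k - j) = k.choose j := Nat.choose_symm (by omega)
    have e1 := Nat.choose_mul (n := k) (k := j + m) (s := j) (Nat.le_add_right j m)
    have e2 := Nat.choose_mul (n := k) (k := j + m) (s := m) (Nat.le_add_left m j)
    rw [Nat.add_sub_cancel_left] at e1
    rw [Nat.add_sub_cancel] at e2
    have e3 : (j + m).choose j = (j + m).choose m := by
      have := Nat.choose_symm (Nat.le_add_left m j)
      rwa [Nat.add_sub_cancel] at this
    have h3 : k.choose j * (k - j).choose m = k.choose m * (k - m).choose j := by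
      rw [← e1, ← e2, e3]
    rw [h1, h2]
    calc m.choose j * (k - j).choose m * k.choose j
        = m.choose j * (k.choose j * (k - j).choose m) := by ring
      _ = m.choose j * (k.choose m * (k - m).choose j) := by rw [h3]
      _ = k.choose m * (m.choose j * (k - m).choose j) := by ring
  rw [Finset.sum_congr rfl key, ← Finset.mul_sum]
  have vdm : ∑ j ∈ Finset.range (min m (k - m) + 1), m.choose j * (k - m).choose j
      = k.choose (k - m) := by
    have hext : ∑ j ∈ Finset.range (min m (k - m) + 1), m.choose j * (k - m).choose j
        = ∑ j ∈ Finset.range (k - m + 1), m.choose j * (k - m).choose j := by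
      apply Finset.sum_subset
      · intro x hx
        simp only [Finset.mem_range] at hx ⊢
        omega
      · intro x hx hx'
        simp only [Finset.mem_range] at hx hx'
        have : m < x := by omega
        rw [Nat.choose_eq_zero_of_lt this, Nat.zero_mul]
    rw [hext]
    have : ∀ j ∈ Finset.range (k - m + 1),
        m.choose j * (k - m).choose j = m.choose j * (k - m).choose ((k - m) - j) := by
      intro j hj
      simp only [Finset.mem_range, Nat.lt_succ_iff] at hj
      rw [Nat.choose_symm hj]
    rw [Finset.sum_congr rfl this]
    have hv := Nat.add_choose_eq m (k - m) (k - m)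
    rw [Finset.Nat.sum_antidiagonal_eq_sum_range_succ_mk] at hv
    rw [← hv, show m + (k - m) = k by omega]
  rw [vdm]
end

section
/- For natural number k and real h > 0: ∑_{m=0}^{k} C(k,m)²·h^{-m}/(m+1) = ∑_{j=0}^{⌊k/2⌋} ∑_{l=0}^{k-2j} (k!/((j!)²·l!·(k-2j-l)!))·h^{-j-l}/(j+l+1). -/
open Finset

-- Vandermonde in range form
lemma vand (k m : ℕ) (hm : m ≤ k) :
    ∑ j ∈ Finset.range (min m (k - m) + 1), m.choose j * (k - m).choose j = k.choose m := by
  have h1 : ∑ j ∈ Finset.range (min m (k - m) + 1), m.choose j * (k - m).choose j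
      = ∑ j ∈ Finset.range (k - m + 1), m.choose j * (k - m).choose j := by
    apply Finset.sum_subset
    · exact Finset.range_subset_range.2 (by omega)
    · intro j hj hj'
      simp only [Finset.mem_range] at hj hj'
      have : m < j := by omega
      rw [Nat.choose_eq_zero_of_lt this, zero_mul]
  rw [h1]
  have h2 : k.choose m = (m + (k - m)).choose (k - m) := by
    have hk : m + (k - m) = k := by omega
    rw [hk, Nat.choose_symm hm]
  rw [h2, Nat.add_choose_eq, Finset.Nat.sum_antidiagonal_eq_sum_range_succ_mk]
  apply Finset.sum_congr rfl
  intro j hj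
  simp only [Finset.mem_range] at hj
  rw [Nat.choose_symm (by omega)]

lemma core_nat (k m j : ℕ) (hj1 : j ≤ m) (hj2 : j + m ≤ k) :
    m.choose j * (k - m).choose j * k.choose m
      * (j.factorial * j.factorial * (m - j).factorial * (k - j - m).factorial)
      = k.factorial := by
  have e1 : m.choose j * j.factorial * (m - j).factorial = m.factorial :=
    Nat.choose_mul_factorial_mul_factorial hj1
  have e2 : (k - m).choose j * j.factorial * (k - m - j).factorial = (k - m).factorial :=
    Nat.choose_mul_factorial_mul_factorial (by omega)
  have e3 : k.choose m * m.factorial * (k - m).factorial = k.factorial :=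
    Nat.choose_mul_factorial_mul_factorial (by omega)
  have e4 : k - j - m = k - m - j := by omega
  rw [e4, ← e3, ← e1, ← e2]; ring

lemma core_real (k m j : ℕ) (hj1 : j ≤ m) (hj2 : j + m ≤ k) :
    (k.factorial : ℝ) / ((j.factorial : ℝ) ^ 2 * (m - j).factorial * (k - j - m).factorial)
      = ((m.choose j * (k - m).choose j * k.choose m : ℕ) : ℝ) := by
  have hne : ((j.factorial : ℝ) ^ 2 * (m - j).factorial * (k - j - m).factorial) ≠ 0 := by
    positivity
  rw [div_eq_iff hne]
  have := core_nat k m j hj1 hj2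
  have := congrArg (fun n : ℕ => (n : ℝ)) this
  push_cast at this ⊢
  linarith [this]

theorem stmt_18 (k : ℕ) (h : ℝ) (hh : 0 < h) :
    ∑ m ∈ Finset.range (k + 1), (k.choose m : ℝ) ^ 2 * h ^ (-(m : ℤ)) / (m + 1)
      = ∑ j ∈ Finset.range (k / 2 + 1), ∑ l ∈ Finset.range (k - 2 * j + 1),
          ((k.factorial : ℝ)
              / ((j.factorial : ℝ) ^ 2 * l.factorial * (k - 2 * j - l).factorial))
            * h ^ (-((j : ℤ) + l)) / ((j : ℝ) + l + 1) := by
  set G : ℕ → ℕ → ℝ := fun j m =>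
    (k.factorial : ℝ) / ((j.factorial : ℝ) ^ 2 * (m - j).factorial * (k - j - m).factorial)
      * h ^ (-(m : ℤ)) / ((m : ℝ) + 1) with hG
  have stepA : ∀ j ∈ Finset.range (k / 2 + 1),
      ∑ l ∈ Finset.range (k - 2 * j + 1),
          ((k.factorial : ℝ)
              / ((j.factorial : ℝ) ^ 2 * l.factorial * (k - 2 * j - l).factorial))
            * h ^ (-((j : ℤ) + l)) / ((j : ℝ) + l + 1)
        = ∑ m ∈ Finset.range (k + 1), if m ∈ Finset.Icc j (k - j) then G j m else 0 := by
    intro j hj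
    simp only [Finset.mem_range] at hj
    have h2j : 2 * j ≤ k := by omega
    rw [Finset.sum_ite_mem]
    have hsub : Finset.Icc j (k - j) ⊆ Finset.range (k + 1) := by
      intro x hx
      simp only [Finset.mem_Icc] at hx
      simp only [Finset.mem_range]; omega
    rw [Finset.inter_eq_right.2 hsub]
    have : Finset.Icc j (k - j) = Finset.Ico j (k - j + 1) := by
      rw [Finset.Ico_add_one_right_eq_Icc]
    rw [this, Finset.sum_Ico_eq_sum_range]
    have hrng : k - j + 1 - j = k - 2 * j + 1 := by omega
    rw [hrng]
    apply Finset.sum_congr rfl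
    intro l hl
    simp only [Finset.mem_range] at hl
    have h1 : j + l - j = l := by omega
    have h2 : k - j - (j + l) = k - 2 * j - l := by omega
    rw [hG]
    simp only [h1, h2]
    push_cast
    ring
  rw [Finset.sum_congr rfl stepA, Finset.sum_comm]
  apply Finset.sum_congr rfl
  intro m hm
  simp only [Finset.mem_range] at hm
  have hmk : m ≤ k := by omega
  have stepC : ∑ j ∈ Finset.range (k / 2 + 1), (if m ∈ Finset.Icc j (k - j) then G j m else 0)
      = ∑ j ∈ Finset.range (min m (k - m) + 1), G j m := by
    have : ∀ j, (m ∈ Finset.Icc j (k - j)) ↔ j ∈ Finset.range (min m (k - m) + 1) := by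
      intro j
      simp only [Finset.mem_Icc, Finset.mem_range]
      omega
    simp only [this]
    rw [Finset.sum_ite_mem]
    congr 1
    apply Finset.inter_eq_right.2
    exact Finset.range_subset_range.2 (by omega)
  rw [stepC]
  have stepD : ∀ j ∈ Finset.range (min m (k - m) + 1),
      G j m = ((m.choose j * (k - m).choose j * k.choose m : ℕ) : ℝ)
        * (h ^ (-(m : ℤ)) / ((m : ℝ) + 1)) := by
    intro j hj
    simp only [Finset.mem_range] at hj
    rw [hG]
    simp only []
    rw [core_real k m j (by omega) (by omega)]
    ring
  rw [Finset.sum_congr rfl stepD, ← Finset.sum_mul]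
  rw [← Nat.cast_sum]
  have : ∑ j ∈ Finset.range (min m (k - m) + 1), m.choose j * (k - m).choose j * k.choose m
      = k.choose m * k.choose m := by
    rw [← Finset.sum_mul, vand k m hmk]
  rw [this]
  push_cast
  ring
end
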